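/- Let (G, B₁, B₂) be a Rota-Baxter system of groups with descendent operation ∘. For t ∈ G, let e_t = B₁(t)^{-1}tB₂(t)^{-1} and G_t = {a ∈ G | a ∘ e_t = a}. Then G_t coincides with G ∘ e_t = {a ∘ e_t | a ∈ G} and (G_t, ∘) is a group with identity e_t. -/
import Mathlib


theorem stmt_14 {G : Type*} [Group G] (B₁ B₂ : G → G)
    (h1 : ∀ a b : G, B₁ a * B₁ b = B₁ (B₁ a * b * B₂ a))
    (h2 : ∀ a b : G, B₂ b * B₂ a = B₂ (B₁ a * b * B₂ a))
    (circ : G → G → G) (hcirc : ∀ a b, circ a b = B₁ a * b * B₂ a)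
    (t : G) (e : G) (he : e = (B₁ t)⁻¹ * t * (B₂ t)⁻¹)
    (Gt : Set G) (hGt : Gt = {a : G | circ a e = a}) :
    Gt = {x : G | ∃ a : G, x = circ a e} ∧
    e ∈ Gt ∧
    (∀ a ∈ Gt, ∀ b ∈ Gt, circ a b ∈ Gt) ∧
    (∀ a ∈ Gt, circ e a = a ∧ circ a e = a) ∧
    (∀ a ∈ Gt, ∃ b ∈ Gt, circ a b = e ∧ circ b a = e) := by
  have hte : B₁ t * e * B₂ t = t := by rw [he]; group
  have hB1e : B₁ e = 1 := by
    have h := h1 t e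
    rw [hte] at h
    exact mul_left_cancel (h.trans (mul_one (B₁ t)).symm)
  have hB2e : B₂ e = 1 := by
    have h := h2 t e
    rw [hte] at h
    exact mul_right_cancel (h.trans (one_mul (B₂ t)).symm)
  have hce : ∀ x, circ e x = x := fun x => by rw [hcirc, hB1e, hB2e]; group
  have assoc : ∀ a b c, circ (circ a b) c = circ a (circ b c) := by
    intro a b c
    simp only [hcirc]
    rw [← h1 a b, ← h2 a b]
    group
  have hmem : ∀ a, a ∈ Gt ↔ circ a e = a := fun a => by rw [hGt]; rfl
  have hee : e ∈ Gt := (hmem e).mpr (hce e)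
  refine ⟨?_, hee, ?_, ?_, ?_⟩
  · ext x
    simp only [Set.mem_setOf_eq, hmem]
    constructor
    · intro hx; exact ⟨x, hx.symm⟩
    · rintro ⟨a, rfl⟩
      rw [assoc, hce e]
  · intro a ha b hb
    rw [hmem] at hb ⊢
    rw [assoc, hb]
  · intro a ha
    exact ⟨hce a, (hmem a).mp ha⟩
  · intro a ha
    rw [hmem, hcirc] at ha
    have hab : B₁ a * ((B₁ a)⁻¹ * e * (B₂ a)⁻¹) * B₂ a = e := by group
    have hb1 : B₁ ((B₁ a)⁻¹ * e * (B₂ a)⁻¹) = (B₁ a)⁻¹ := by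
      have h := h1 a ((B₁ a)⁻¹ * e * (B₂ a)⁻¹)
      rw [hab, hB1e] at h
      exact eq_inv_of_mul_eq_one_right h
    have hb2 : B₂ ((B₁ a)⁻¹ * e * (B₂ a)⁻¹) = (B₂ a)⁻¹ := by
      have h := h2 a ((B₁ a)⁻¹ * e * (B₂ a)⁻¹)
      rw [hab, hB2e] at h
      exact eq_inv_of_mul_eq_one_left h
    refine ⟨(B₁ a)⁻¹ * e * (B₂ a)⁻¹, ?_, ?_, ?_⟩
    · rw [hmem, hcirc, hb1, hb2]
    · rw [hcirc]; exact hab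
    · rw [hcirc, hb1, hb2]
      nth_rewrite 2 [← ha]
      group
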